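/- Let A ∈ ℝ^{m×n}, S ∈ ℝ^{m×ℓ}, and let w ∈ Range(A) with S^⊤w ≠ 0 and A^⊤SS^⊤w ≠ 0. Write Λ = λ_min(A^⊤SS^⊤A/‖A^⊤S‖²), the smallest nonzero eigenvalue of A^⊤SS^⊤A divided by ‖A^⊤S‖_2². Then the adaptive step-size L = ‖S^⊤w‖²/‖A^⊤SS^⊤w‖² satisfies L ≤ 1/(Λ·‖A^⊤S‖_2²). -/

import Mathlib

open Matrix
open scoped Matrix.Norms.L2Operator

lemma dp_self_nonneg {k : ℕ} (v : Fin k → ℝ) : 0 ≤ v ⬝ᵥ v :=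
  Finset.sum_nonneg fun i _ => mul_self_nonneg _

lemma spectral_key {n : ℕ} (M : Matrix (Fin n) (Fin n) ℝ) (hM : M.IsHermitian) (Λ : ℝ)
    (hΛ0 : 0 ≤ Λ) (hle : ∀ i, hM.eigenvalues i ≠ 0 → Λ ≤ hM.eigenvalues i)
    (u : Fin n → ℝ) :
    Λ * (u ⬝ᵥ M.mulVec u) ≤ M.mulVec u ⬝ᵥ M.mulVec u := by
  set b := hM.eigenvectorBasis with hb
  have hinner : ∀ x y : Fin n → ℝ,
      x ⬝ᵥ y = ∑ i, (x ⬝ᵥ ⇑(b i)) * (⇑(b i) ⬝ᵥ y) := by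
    intro x y
    have h := b.sum_inner_mul_inner ((WithLp.equiv 2 _).symm x) ((WithLp.equiv 2 _).symm y)
    simpa [PiLp.inner_apply, dotProduct, RCLike.inner_apply, mul_comm] using h.symm
  have hMb : ∀ i, (M.mulVec u) ⬝ᵥ ⇑(b i) = hM.eigenvalues i * (u ⬝ᵥ ⇑(b i)) := by
    intro i
    have h1 : (M.mulVec u) ⬝ᵥ ⇑(b i) = ⇑(b i) ⬝ᵥ (M.mulVec u) := dotProduct_comm _ _
    rw [h1, dotProduct_mulVec, ← mulVec_transpose]
    have hMt : Mᵀ = M := by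
      have := hM
      rwa [Matrix.IsHermitian, conjTranspose_eq_transpose_of_trivial] at this
    rw [hMt, hM.mulVec_eigenvectorBasis]
    simp [dotProduct_comm _ u, smul_dotProduct, smul_eq_mul, hb]
  have e1 : u ⬝ᵥ M.mulVec u = ∑ i, hM.eigenvalues i * (u ⬝ᵥ ⇑(b i)) ^ 2 := by
    rw [hinner u (M.mulVec u)]
    refine Finset.sum_congr rfl fun i _ => ?_
    have : ⇑(b i) ⬝ᵥ M.mulVec u = hM.eigenvalues i * (u ⬝ᵥ ⇑(b i)) := by
      rw [← hMb i, dotProduct_comm]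
    rw [this]; ring
  have e2 : M.mulVec u ⬝ᵥ M.mulVec u
      = ∑ i, (hM.eigenvalues i) ^ 2 * (u ⬝ᵥ ⇑(b i)) ^ 2 := by
    rw [hinner (M.mulVec u) (M.mulVec u)]
    refine Finset.sum_congr rfl fun i _ => ?_
    have h1 : ⇑(b i) ⬝ᵥ M.mulVec u = hM.eigenvalues i * (u ⬝ᵥ ⇑(b i)) := by
      rw [← hMb i, dotProduct_comm]
    rw [hMb i, h1]; ring
  rw [e1, e2, Finset.mul_sum]
  refine Finset.sum_le_sum fun i _ => ?_
  by_cases h : hM.eigenvalues i = 0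
  · simp [h]
  · have hΛi := hle i h
    have hev : 0 ≤ hM.eigenvalues i := le_trans hΛ0 hΛi
    have hm := mul_le_mul_of_nonneg_right
      (mul_le_mul_of_nonneg_right hΛi hev) (sq_nonneg (u ⬝ᵥ ⇑(b i)))
    nlinarith [hm]

/-- For `w ∈ Range(A)` with `Sᵀw ≠ 0` and `AᵀSSᵀw ≠ 0`, the adaptive step-size
`L = ‖Sᵀw‖²/‖AᵀSSᵀw‖²` satisfies `L ≤ 1/(Λ ‖AᵀS‖₂²)`, where `Λ` is the smallest
nonzero eigenvalue of `AᵀSSᵀA/‖AᵀS‖₂²`. -/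
theorem adaptive_stepsize_upper_bound {m n ℓ : ℕ} (A : Matrix (Fin m) (Fin n) ℝ)
    (S : Matrix (Fin m) (Fin ℓ) ℝ) (w : Fin m → ℝ)
    (hw : w ∈ Set.range A.mulVec)
    (h1 : Sᵀ.mulVec w ≠ 0) (h2 : (Aᵀ * S * Sᵀ).mulVec w ≠ 0)
    (Λ : ℝ)
    (hΛ : IsLeast {μ : ℝ | μ ≠ 0 ∧ ∃ v : Fin n → ℝ, v ≠ 0 ∧
      ((1 / ‖Aᵀ * S‖ ^ 2) • (Aᵀ * S * Sᵀ * A)).mulVec v = μ • v} Λ) :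
    (Sᵀ.mulVec w ⬝ᵥ Sᵀ.mulVec w) /
        ((Aᵀ * S * Sᵀ).mulVec w ⬝ᵥ (Aᵀ * S * Sᵀ).mulVec w) ≤
      1 / (Λ * ‖Aᵀ * S‖ ^ 2) := by
  obtain ⟨u, hu⟩ := hw
  set B : Matrix (Fin n) (Fin ℓ) ℝ := Aᵀ * S with hB
  set C : ℝ := ‖B‖ ^ 2 with hC
  set M : Matrix (Fin n) (Fin n) ℝ := Aᵀ * S * Sᵀ * A with hMdef
  have hMBB : M = B * Bᵀ := by
    rw [hMdef, hB, Matrix.transpose_mul, Matrix.transpose_transpose, Matrix.mul_assoc]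
  -- quadratic form identity: for all v, v ⬝ᵥ M *ᵥ v = ‖Bᵀ v‖²
  have hquad : ∀ v : Fin n → ℝ, v ⬝ᵥ M.mulVec v = (Bᵀ.mulVec v) ⬝ᵥ (Bᵀ.mulVec v) := by
    intro v
    rw [hMBB, ← Matrix.mulVec_mulVec, dotProduct_mulVec, ← mulVec_transpose]
  -- rewrite the two vectors
  have hy : Sᵀ.mulVec w = Bᵀ.mulVec u := by
    rw [← hu, Matrix.mulVec_mulVec, hB, Matrix.transpose_mul, Matrix.transpose_transpose]
  have hq : (Aᵀ * S * Sᵀ).mulVec w = M.mulVec u := by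
    rw [← hu, Matrix.mulVec_mulVec, hMdef]
  -- positivity of C
  have hBne : B ≠ 0 := by
    intro h0
    apply h2
    show (B * Sᵀ) *ᵥ w = 0
    rw [h0, Matrix.zero_mul, Matrix.zero_mulVec]
  have hCpos : 0 < C := by
    rw [hC]
    have : ‖B‖ ≠ 0 := norm_ne_zero_iff.mpr hBne
    positivity
  -- Hermitian structure
  have hMH : M.IsHermitian := by
    rw [hMBB]
    have := Matrix.isHermitian_mul_conjTranspose_self B
    rwa [conjTranspose_eq_transpose_of_trivial] at this
  have hM'H : ((1 / C) • M).IsHermitian := by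
    rw [Matrix.IsHermitian, Matrix.conjTranspose_smul, hMH.eq]
    congr 1
  -- Λ is positive
  have hΛpos : 0 < Λ := by
    obtain ⟨hne, v, hv0, heq⟩ := hΛ.1
    have hvv : 0 < v ⬝ᵥ v := by
      rcases lt_or_eq_of_le (dp_self_nonneg v) with h | h
      · exact h
      · exact absurd (dotProduct_self_eq_zero.mp h.symm) hv0
    have hnum : (1 / C) * ((Bᵀ.mulVec v) ⬝ᵥ (Bᵀ.mulVec v)) = Λ * (v ⬝ᵥ v) := by
      have h := congrArg (fun z => v ⬝ᵥ z) heq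
      simp only [Matrix.smul_mulVec, dotProduct_smul, smul_eq_mul, hquad] at h
      linarith [h]
    have hΛnn : 0 ≤ Λ := by
      nlinarith [dp_self_nonneg (Bᵀ.mulVec v), one_div_pos.mpr hCpos]
    exact lt_of_le_of_ne hΛnn (Ne.symm hne)
  -- eigenvalue lower bound for the scaled matrix
  have hle : ∀ i, hM'H.eigenvalues i ≠ 0 → Λ ≤ hM'H.eigenvalues i := by
    intro i hi
    refine hΛ.2 ⟨hi, ⇑(hM'H.eigenvectorBasis i), ?_, ?_⟩
    · intro h0
      have := hM'H.eigenvectorBasis.orthonormal.1 i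
      rw [show (hM'H.eigenvectorBasis i : EuclideanSpace ℝ (Fin n)) = 0 from by simpa using h0] at this
      simp at this
    · exact hM'H.mulVec_eigenvectorBasis i
  -- key inequality
  have key := spectral_key ((1 / C) • M) hM'H Λ hΛpos.le hle u
  have hsm : ((1 / C) • M).mulVec u = (1 / C) • (M.mulVec u) := Matrix.smul_mulVec _ _ _
  rw [hsm, dotProduct_smul, smul_dotProduct, dotProduct_smul, smul_eq_mul, smul_eq_mul,
    smul_eq_mul] at key
  -- key : Λ * ((1/C) * (u ⬝ᵥ M *ᵥ u)) ≤ (1/C) * ((1/C) * (Mu ⬝ᵥ Mu))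
  rw [hy, hq]
  have hynz : Bᵀ.mulVec u ≠ 0 := by rw [← hy]; exact h1
  have hqnz : M.mulVec u ≠ 0 := by rw [← hq]; exact h2
  have hypos : 0 < (Bᵀ.mulVec u) ⬝ᵥ (Bᵀ.mulVec u) := by
    rcases lt_or_eq_of_le (dp_self_nonneg (Bᵀ.mulVec u)) with h | h
    · exact h
    · exact absurd (dotProduct_self_eq_zero.mp h.symm) hynz
  have hqpos : 0 < (M.mulVec u) ⬝ᵥ (M.mulVec u) := by
    rcases lt_or_eq_of_le (dp_self_nonneg (M.mulVec u)) with h | h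
    · exact h
    · exact absurd (dotProduct_self_eq_zero.mp h.symm) hqnz
  have hadj : u ⬝ᵥ M.mulVec u = (Bᵀ.mulVec u) ⬝ᵥ (Bᵀ.mulVec u) := hquad u
  rw [div_le_div_iff₀ hqpos (by positivity), one_mul]
  rw [← hadj]
  have hCne : C ≠ 0 := ne_of_gt hCpos
  have key2 : Λ * C * (u ⬝ᵥ M.mulVec u) ≤ M.mulVec u ⬝ᵥ M.mulVec u := by
    have h := mul_le_mul_of_nonneg_left key (le_of_lt (mul_pos hCpos hCpos))
    have e1 : C * C * (Λ * (1 / C * (u ⬝ᵥ M.mulVec u))) = Λ * C * (u ⬝ᵥ M.mulVec u) := by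
      field_simp
    have e2 : C * C * (1 / C * (1 / C * (M.mulVec u ⬝ᵥ M.mulVec u)))
        = M.mulVec u ⬝ᵥ M.mulVec u := by
      field_simp
    rw [e1, e2] at h
    exact h
  linarith [key2]
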